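/- Let g ≥ 3, let 0 ≤ k < (2g−3)(g−2), and let τ ∈ S_{2g−3}. If σ₁, σ₂ ∈ A(k) but σ₁ ∉ A(k+1) and σ₂ ∉ A(k+1), then l(σ₁σ₂τ) ≤ l(σ₁) + l(σ₂) + l(τ) − 2; in particular no such pair (σ₁, σ₂) lies in ℱ_k(i, j, τ) for i = l(σ₁), j = l(σ₂). -/

import Mathlib

/-- `permLen σ = n - c(σ)` where `c(σ)` is the number of orbits (cycles, counting
fixed points) of `σ`.  Equivalently, it is `#support σ - (number of nontrivial cycles)`. -/
def permLen {n : ℕ} (σ : Equiv.Perm (Fin n)) : ℕ :=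
  σ.support.card - Multiset.card σ.cycleType


section Helpers
open Equiv Equiv.Perm Finset
variable {n : ℕ}

lemma card_cycleType_le_sum (σ : Equiv.Perm (Fin n)) :
    Multiset.card σ.cycleType ≤ σ.cycleType.sum := by
  have h := Multiset.card_nsmul_le_sum (s := σ.cycleType) (a := 1)
    (fun x hx => le_trans one_le_two (two_le_of_mem_cycleType hx))
  simpa using h

lemma permLen_eq (σ : Equiv.Perm (Fin n)) :
    permLen σ = σ.cycleType.sum - Multiset.card σ.cycleType := by
  rw [permLen, sum_cycleType]

@[simp] lemma permLen_one : permLen (1 : Equiv.Perm (Fin n)) = 0 := by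
  simp [permLen]

lemma permLen_conj (σ τ : Equiv.Perm (Fin n)) :
    permLen (τ * σ * τ⁻¹) = permLen σ := by
  rw [permLen_eq, permLen_eq, cycleType_conj]

lemma permLen_mul_of_disjoint {f g : Equiv.Perm (Fin n)} (h : Equiv.Perm.Disjoint f g) :
    permLen (f * g) = permLen f + permLen g := by
  have h1 := card_cycleType_le_sum f
  have h2 := card_cycleType_le_sum g
  rw [permLen_eq, permLen_eq, permLen_eq, Equiv.Perm.Disjoint.cycleType_mul h, Multiset.sum_add, Multiset.card_add]
  omega

lemma permLen_add_one_le {σ : Equiv.Perm (Fin n)} (h : σ ≠ 1) :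
    permLen σ + 1 ≤ σ.support.card := by
  have h1 : 1 ≤ Multiset.card σ.cycleType := card_cycleType_pos.2 h
  have h2 : Multiset.card σ.cycleType ≤ σ.support.card := by
    rw [← sum_cycleType]; exact card_cycleType_le_sum σ
  rw [permLen]; omega

lemma permLen_isCycle {σ : Equiv.Perm (Fin n)} (h : σ.IsCycle) :
    permLen σ + 1 = σ.support.card := by
  have h2 := h.two_le_card_support
  have h1 : Multiset.card σ.cycleType = 1 := card_cycleType_eq_one.2 h
  rw [permLen]; omega

lemma permLen_swap {t : Equiv.Perm (Fin n)} (h : t.IsSwap) : permLen t = 1 := by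
  obtain ⟨x, y, hxy, rfl⟩ := h
  have h1 : Multiset.card (Equiv.swap x y).cycleType = 1 :=
    card_cycleType_eq_one.2 (isCycle_swap hxy)
  rw [permLen, card_support_swap hxy, h1]

lemma permLen_swap_mul_le_aux {a b : Fin n} (hab : a ≠ b) {σ : Equiv.Perm (Fin n)}
    (ha : σ a ≠ a) : permLen (Equiv.swap a b * σ) ≤ permLen σ + 1 := by
  classical
  set c := σ.cycleOf a with hc_def
  have hc : c ∈ σ.cycleFactorsFinset := cycleOf_mem_cycleFactorsFinset_iff.2 (mem_support.2 ha)
  have hcyc : c.IsCycle := isCycle_cycleOf σ ha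
  have hd : Equiv.Perm.Disjoint c (σ * c⁻¹) := (disjoint_mul_inv_of_mem_cycleFactorsFinset hc).symm
  set d := σ * c⁻¹ with hd_def
  have hσ : c * d = σ := by
    rw [hd.commute.eq, hd_def, inv_mul_cancel_right]
  have hsupp : σ.support = c.support ∪ d.support := by rw [← hσ, hd.support_mul]
  have haC : a ∈ c.support := mem_support_cycleOf_iff.2 ⟨Equiv.Perm.SameCycle.refl _ _, mem_support.2 ha⟩
  have hlen : permLen σ = permLen c + permLen d := by rw [← hσ, permLen_mul_of_disjoint hd]
  have hcd : _root_.Disjoint c.support d.support := disjoint_iff_disjoint_support.1 hd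
  by_cases hbC : b ∈ c.support
  · -- b in same cycle as a
    have hsub : (Equiv.swap a b * c).support ⊆ c.support := by
      intro x hx
      by_contra hx'
      have hcx : c x = x := notMem_support.1 hx'
      have hxa : x ≠ a := fun h => hx' (h ▸ haC)
      have hxb : x ≠ b := fun h => hx' (h ▸ hbC)
      exact mem_support.1 hx (by simp [mul_apply, hcx, swap_apply_of_ne_of_ne hxa hxb])
    have hdisj : Equiv.Perm.Disjoint (Equiv.swap a b * c) d :=
      disjoint_iff_disjoint_support.2 (Finset.disjoint_of_subset_left hsub hcd)
    have hkey : Equiv.swap a b * σ = Equiv.swap a b * c * d := by rw [← hσ, mul_assoc]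
    rw [hkey, permLen_mul_of_disjoint hdisj]
    by_cases h1 : Equiv.swap a b * c = 1
    · rw [h1, permLen_one]; omega
    · have hb1 := permLen_add_one_le h1
      have hb2 := Finset.card_le_card hsub
      have hb3 := permLen_isCycle hcyc
      omega
  · by_cases hbσ : b ∈ σ.support
    · -- b in a different cycle
      have hbd : b ∈ d.support := by
        rw [hsupp, Finset.mem_union] at hbσ; tauto
      have hbne : d b ≠ b := mem_support.1 hbd
      set e := d.cycleOf b with he_def
      have he : e ∈ d.cycleFactorsFinset := cycleOf_mem_cycleFactorsFinset_iff.2 hbd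
      have hecyc : e.IsCycle := isCycle_cycleOf d hbne
      have hd2 : Equiv.Perm.Disjoint e (d * e⁻¹) := (disjoint_mul_inv_of_mem_cycleFactorsFinset he).symm
      set d' := d * e⁻¹ with hd'_def
      have hdd : e * d' = d := by rw [hd2.commute.eq, hd'_def, inv_mul_cancel_right]
      have hbe : b ∈ e.support := mem_support_cycleOf_iff.2 ⟨Equiv.Perm.SameCycle.refl _ _, hbd⟩
      have hed : e.support ⊆ d.support := support_cycleOf_le d b
      have hce : _root_.Disjoint c.support e.support :=
        Finset.disjoint_of_subset_right hed hcd
      have hsuppd : d.support = e.support ∪ d'.support := by rw [← hdd, hd2.support_mul]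
      have hd'd : d'.support ⊆ d.support := by rw [hsuppd]; exact Finset.subset_union_right
      have hkey : Equiv.swap a b * σ = Equiv.swap a b * (c * e) * d' := by
        rw [← hσ, ← hdd]; group
      have hsub : (Equiv.swap a b * (c * e)).support ⊆ c.support ∪ e.support := by
        intro x hx
        by_contra hx'
        rw [Finset.mem_union] at hx'
        push_neg at hx'
        have hcx : c x = x := notMem_support.1 hx'.1
        have hex : e x = x := notMem_support.1 hx'.2
        have hxa : x ≠ a := fun h => hx'.1 (h ▸ haC)
        have hxb : x ≠ b := fun h => hx'.2 (h ▸ hbe)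
        exact mem_support.1 hx (by simp [mul_apply, hcx, hex, swap_apply_of_ne_of_ne hxa hxb])
      have hdisj : Equiv.Perm.Disjoint (Equiv.swap a b * (c * e)) d' := by
        apply disjoint_iff_disjoint_support.2
        apply Finset.disjoint_of_subset_left hsub
        rw [Finset.disjoint_union_left]
        constructor
        · exact Finset.disjoint_of_subset_right hd'd hcd
        · exact disjoint_iff_disjoint_support.1 hd2
      rw [hkey, permLen_mul_of_disjoint hdisj]
      have hlend : permLen d = permLen e + permLen d' := by
        rw [← hdd, permLen_mul_of_disjoint hd2]
      by_cases h1 : Equiv.swap a b * (c * e) = 1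
      · rw [h1, permLen_one]; omega
      · have hb1 := permLen_add_one_le h1
        have hb2 := Finset.card_le_card hsub
        have hb4 : (c.support ∪ e.support).card = c.support.card + e.support.card :=
          Finset.card_union_of_disjoint hce
        have hb3 := permLen_isCycle hcyc
        have hb5 := permLen_isCycle hecyc
        omega
    · -- b is a fixed point of σ
      have hbd : b ∉ d.support := fun h => hbσ (hsupp ▸ Finset.mem_union_right _ h)
      have hbc : c b = b := notMem_support.1 (fun h => hbC h)
      have hsub : (Equiv.swap a b * c).support ⊆ insert b c.support := by
        intro x hx
        by_contra hx'
        rw [Finset.mem_insert] at hx'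
        push_neg at hx'
        have hcx : c x = x := notMem_support.1 hx'.2
        have hxa : x ≠ a := fun h => hx'.2 (h ▸ haC)
        exact mem_support.1 hx (by simp [mul_apply, hcx, swap_apply_of_ne_of_ne hxa hx'.1])
      have hdisj : Equiv.Perm.Disjoint (Equiv.swap a b * c) d := by
        apply disjoint_iff_disjoint_support.2
        apply Finset.disjoint_of_subset_left hsub
        rw [Finset.disjoint_insert_left]
        exact ⟨hbd, hcd⟩
      have hkey : Equiv.swap a b * σ = Equiv.swap a b * c * d := by rw [← hσ, mul_assoc]
      rw [hkey, permLen_mul_of_disjoint hdisj]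
      by_cases h1 : Equiv.swap a b * c = 1
      · rw [h1, permLen_one]; omega
      · have hb1 := permLen_add_one_le h1
        have hb2 := Finset.card_le_card hsub
        have hb4 := Finset.card_insert_le b c.support
        have hb3 := permLen_isCycle hcyc
        omega

lemma permLen_swap_mul_le {t : Equiv.Perm (Fin n)} (ht : t.IsSwap) (σ : Equiv.Perm (Fin n)) :
    permLen (t * σ) ≤ permLen σ + 1 := by
  classical
  obtain ⟨a, b, hab, rfl⟩ := ht
  by_cases ha : σ a = a
  · by_cases hb : σ b = b
    · have hd : Equiv.Perm.Disjoint (Equiv.swap a b) σ := by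
        rw [disjoint_iff_disjoint_support, support_swap hab, Finset.disjoint_left]
        intro x hx
        rw [Finset.mem_insert, Finset.mem_singleton] at hx
        rcases hx with rfl | rfl <;> simp [mem_support, ha, hb]
      rw [permLen_mul_of_disjoint hd, permLen_swap ⟨a, b, hab, rfl⟩]; omega
    · rw [Equiv.swap_comm]
      exact permLen_swap_mul_le_aux hab.symm hb
  · exact permLen_swap_mul_le_aux hab ha

lemma cycle_decomp (m : ℕ) : ∀ c : Equiv.Perm (Fin n), c.IsCycle → c.support.card ≤ m →
    ∃ L : List (Equiv.Perm (Fin n)), (∀ t ∈ L, t.IsSwap) ∧ L.prod = c ∧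
      L.length + 1 = c.support.card := by
  induction m with
  | zero => intro c hc hcard; have := hc.two_le_card_support; omega
  | succ m ih =>
    intro c hc hcard
    obtain ⟨x, hx, -⟩ := id hc
    by_cases h1 : c (c x) = x
    · have hcs : c = Equiv.swap x (c x) := hc.eq_swap_of_apply_apply_eq_self hx h1
      refine ⟨[c], ?_, by simp, ?_⟩
      · intro t ht; rw [List.mem_singleton] at ht; exact ht ▸ ⟨x, c x, Ne.symm hx, hcs⟩
      · rw [hcs, card_support_swap (Ne.symm hx)]; rfl
    · set c' := Equiv.swap x (c x) * c with hc'_def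
      have hc' : c'.IsCycle := hc.swap_mul hx h1
      have hs : c'.support = c.support \ {x} := support_swap_mul_eq c x h1
      have hxs : x ∈ c.support := mem_support.2 hx
      have hcard' : c'.support.card = c.support.card - 1 := by
        rw [hs, Finset.sdiff_singleton_eq_erase, Finset.card_erase_of_mem hxs]
      obtain ⟨L, hL1, hL2, hL3⟩ := ih c' hc' (by omega)
      refine ⟨Equiv.swap x (c x) :: L, ?_, ?_, ?_⟩
      · intro t ht
        rcases List.mem_cons.1 ht with rfl | ht'
        · exact ⟨x, c x, Ne.symm hx, rfl⟩
        · exact hL1 t ht'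
      · rw [List.prod_cons, hL2, hc'_def, swap_mul_self_mul]
      · simp only [List.length_cons]
        have h2 := hc.two_le_card_support
        omega

lemma swap_decomp (σ : Equiv.Perm (Fin n)) :
    ∃ L : List (Equiv.Perm (Fin n)), (∀ t ∈ L, t.IsSwap) ∧ L.prod = σ ∧
      L.length = permLen σ := by
  induction σ using cycle_induction_on with
  | base_one => exact ⟨[], by simp, by simp, by simp⟩
  | base_cycles σ hσ =>
    obtain ⟨L, h1, h2, h3⟩ := cycle_decomp σ.support.card σ hσ le_rfl
    have h4 := permLen_isCycle hσ
    exact ⟨L, h1, h2, by omega⟩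
  | induction_disjoint σ τ hd _ hσ hτ =>
    obtain ⟨L1, ha1, ha2, ha3⟩ := hσ
    obtain ⟨L2, hb1, hb2, hb3⟩ := hτ
    refine ⟨L1 ++ L2, ?_, ?_, ?_⟩
    · intro t ht; rcases List.mem_append.1 ht with h | h
      · exact ha1 t h
      · exact hb1 t h
    · rw [List.prod_append, ha2, hb2]
    · rw [List.length_append, ha3, hb3, permLen_mul_of_disjoint hd]

lemma permLen_list_mul_le (L : List (Equiv.Perm (Fin n))) (hL : ∀ t ∈ L, t.IsSwap)
    (g : Equiv.Perm (Fin n)) : permLen (L.prod * g) ≤ L.length + permLen g := by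
  induction L with
  | nil => simp
  | cons t L ih =>
    rw [List.prod_cons, mul_assoc]
    calc permLen (t * (L.prod * g)) ≤ permLen (L.prod * g) + 1 :=
          permLen_swap_mul_le (hL t List.mem_cons_self) _
      _ ≤ (t :: L).length + permLen g := by
          have := ih (fun u hu => hL u (List.mem_cons_of_mem t hu))
          simp only [List.length_cons]; omega

lemma permLen_mul_le (f g : Equiv.Perm (Fin n)) :
    permLen (f * g) ≤ permLen f + permLen g := by
  obtain ⟨L, h1, rfl, h3⟩ := swap_decomp f
  rw [← h3]
  exact permLen_list_mul_le L h1 g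

lemma sign_eq_permLen (σ : Equiv.Perm (Fin n)) :
    Equiv.Perm.sign σ = (-1 : ℤˣ) ^ (permLen σ) := by
  rw [sign_of_cycleType, permLen_eq]
  have h := card_cycleType_le_sum σ
  have h2 : σ.cycleType.sum + Multiset.card σ.cycleType =
      (σ.cycleType.sum - Multiset.card σ.cycleType) + 2 * Multiset.card σ.cycleType := by omega
  rw [h2, pow_add, pow_mul]
  norm_num

lemma permLen_mul_swap_ne {σ t : Equiv.Perm (Fin n)} (ht : t.IsSwap) :
    permLen (σ * t) ≠ permLen σ := by
  intro h
  obtain ⟨a, b, hab, rfl⟩ := ht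
  have h1 : Equiv.Perm.sign (σ * Equiv.swap a b) = - Equiv.Perm.sign σ := by
    rw [Equiv.Perm.sign_mul, Equiv.Perm.sign_swap hab, mul_neg_one]
  rw [sign_eq_permLen, sign_eq_permLen, h] at h1
  rcases Int.units_eq_one_or ((-1 : ℤˣ) ^ permLen σ) with h2 | h2 <;> rw [h2] at h1 <;>
    exact absurd h1 (by decide)

end Helpers

/-- Given an enumeration `s` of the transpositions (indexed from 1), the set
`A(k) = {σ : l(σ sᵢ) > l(σ) for all 1 ≤ i ≤ k}`. -/
def AkSet {n : ℕ} (s : ℕ → Equiv.Perm (Fin n)) (k : ℕ) : Set (Equiv.Perm (Fin n)) :=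
  {σ | ∀ i : ℕ, 1 ≤ i → i ≤ k → permLen σ < permLen (σ * s i)}

/-- The set `ℱ_k(i, j, τ) = {(σ₁, σ₂) ∈ A(k) × A(k) :
l(σ₁) = i, l(σ₂) = j, l(σ₁σ₂τ) = i + j + l(τ)}`. -/
def FSet {n : ℕ} (s : ℕ → Equiv.Perm (Fin n)) (k i j : ℕ) (τ : Equiv.Perm (Fin n)) :
    Set (Equiv.Perm (Fin n) × Equiv.Perm (Fin n)) :=
  {p | p.1 ∈ AkSet s k ∧ p.2 ∈ AkSet s k ∧ permLen p.1 = i ∧ permLen p.2 = j ∧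
    permLen (p.1 * p.2 * τ) = i + j + permLen τ}

/-- `F_k(i, j, τ) = |ℱ_k(i, j, τ)|`. -/
noncomputable def Fnum {n : ℕ} (s : ℕ → Equiv.Perm (Fin n)) (k i j : ℕ)
    (τ : Equiv.Perm (Fin n)) : ℕ :=
  (FSet s k i j τ).ncard

/-- For `g ≥ 3`, an enumeration of the transpositions as above,
`0 ≤ k < (2g-3)(g-2)` and `τ ∈ S_{2g-3}`: if `σ₁, σ₂ ∈ A(k)` but
`σ₁ ∉ A(k+1)` and `σ₂ ∉ A(k+1)`, then `l(σ₁σ₂τ) ≤ l(σ₁) + l(σ₂) + l(τ) - 2`;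
in particular `(σ₁, σ₂) ∉ ℱ_k(l(σ₁), l(σ₂), τ)`. -/
theorem stmt_3 (g : ℕ) (hg : 3 ≤ g)
    (s : ℕ → Equiv.Perm (Fin (2 * g - 3)))
    (hswap : ∀ i : ℕ, 1 ≤ i → i ≤ (2 * g - 3) * (g - 2) → (s i).IsSwap)
    (hinj : ∀ i j : ℕ, 1 ≤ i → i ≤ (2 * g - 3) * (g - 2) →
      1 ≤ j → j ≤ (2 * g - 3) * (g - 2) → s i = s j → i = j)
    (hsurj : ∀ t : Equiv.Perm (Fin (2 * g - 3)), t.IsSwap →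
      ∃ i : ℕ, 1 ≤ i ∧ i ≤ (2 * g - 3) * (g - 2) ∧ s i = t)
    (hprod : permLen (((List.range (2 * g - 4)).map (fun i => s (i + 1))).prod) = 2 * g - 4)
    (k : ℕ) (hk : k < (2 * g - 3) * (g - 2)) (τ : Equiv.Perm (Fin (2 * g - 3)))
    (σ₁ σ₂ : Equiv.Perm (Fin (2 * g - 3)))
    (h₁ : σ₁ ∈ AkSet s k) (h₂ : σ₂ ∈ AkSet s k)
    (h₁' : σ₁ ∉ AkSet s (k + 1)) (h₂' : σ₂ ∉ AkSet s (k + 1)) :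
    permLen (σ₁ * σ₂ * τ) + 2 ≤ permLen σ₁ + permLen σ₂ + permLen τ ∧
      (σ₁, σ₂) ∉ FSet s k (permLen σ₁) (permLen σ₂) τ := by
  have ht : (s (k + 1)).IsSwap := hswap (k + 1) (by omega) (by omega)
  simp only [AkSet, Set.mem_setOf_eq, not_forall, not_lt] at h₁' h₂'
  obtain ⟨i, hi1, hi2, hi3⟩ := h₁'
  obtain ⟨j, hj1, hj2, hj3⟩ := h₂'
  have hieq : i = k + 1 := by
    by_contra h
    exact absurd (h₁ i hi1 (by omega)) (not_lt.2 hi3)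
  have hjeq : j = k + 1 := by
    by_contra h
    exact absurd (h₂ j hj1 (by omega)) (not_lt.2 hj3)
  subst hieq; subst hjeq
  have hA : permLen (σ₁ * s (k + 1)) + 1 ≤ permLen σ₁ := by
    have := permLen_mul_swap_ne (σ := σ₁) ht
    omega
  have hB : permLen (σ₂ * s (k + 1)) + 1 ≤ permLen σ₂ := by
    have := permLen_mul_swap_ne (σ := σ₂) ht
    omega
  have hconj : permLen (s (k + 1) * σ₂) = permLen (σ₂ * s (k + 1)) := by
    have h := permLen_conj (σ₂ * s (k + 1)) (s (k + 1))
    rw [show s (k + 1) * (σ₂ * s (k + 1)) * (s (k + 1))⁻¹ = s (k + 1) * σ₂ by group] at h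
    exact h
  have htt : s (k + 1) * s (k + 1) = 1 := by
    obtain ⟨x, y, hxy, hts⟩ := ht
    rw [hts]; exact Equiv.swap_mul_self x y
  have hkey : σ₁ * σ₂ * τ = (σ₁ * s (k + 1)) * (s (k + 1) * σ₂ * τ) := by
    calc σ₁ * σ₂ * τ = σ₁ * (s (k + 1) * s (k + 1)) * σ₂ * τ := by rw [htt, mul_one]
      _ = (σ₁ * s (k + 1)) * (s (k + 1) * σ₂ * τ) := by group
  have hmain : permLen (σ₁ * σ₂ * τ) + 2 ≤ permLen σ₁ + permLen σ₂ + permLen τ := by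
    have hm1 := permLen_mul_le (σ₁ * s (k + 1)) (s (k + 1) * σ₂ * τ)
    have hm2 := permLen_mul_le (s (k + 1) * σ₂) τ
    rw [hkey]
    omega
  refine ⟨hmain, ?_⟩
  intro hmem
  have h5 : permLen (σ₁ * σ₂ * τ) = permLen σ₁ + permLen σ₂ + permLen τ := hmem.2.2.2.2
  omega
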